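/- (δ is o(h) for mean-zero compactly supported kernel) With δ(thx) := h·[∫ y π(t+h(x+y))K(y)dy]/[∫π(t+h(x+y))K(y)dy] as above: if π is continuous and positive at t, K has compact support R with ∫yK(y)dy = 0 and ∫K(y)dy = 1, then max_{x∈R} |δ evaluated at t+hx| = o(h) as h → 0⁺. -/
import Mathlib


open MeasureTheory Filter

/-- The concluding estimate of Appendix C of Fearnhead & Prangle: for a
continuous density `f` positive at `t`, and a compactly supported mean-zero
kernel `K`, the discrepancy `δ(t + h x)` is `o(h)` uniformly over `x` in the
support of `K`. -/
theorem noisyABC_discrepancy_littleO (d : ℕ) (f K : (Fin d → ℝ) → ℝ)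
    (t : Fin d → ℝ)
    (hf0 : ∀ s, 0 ≤ f s) (hfint : Integrable f) (hf1 : ∫ s, f s = 1)
    (hfc : Continuous f) (hft : 0 < f t)
    (hK0 : ∀ x, 0 ≤ K x) (hKm : Measurable K) (hKsupp : HasCompactSupport K)
    (hK1 : ∫ x, K x = 1) (hKmean : (∫ x, K x • x) = 0) :
    ∀ ε > 0, ∀ᶠ hh : ℝ in nhdsWithin 0 (Set.Ioi 0),
      ∀ x ∈ tsupport K,
        ‖hh • ((∫ y, f ((t + hh • x) + hh • y) * K y)⁻¹ •
            ∫ y, (f ((t + hh • x) + hh • y) * K y) • y)‖ ≤ ε * hh := by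
  intro ε hε
  have hKint : Integrable K := by
    by_contra h
    rw [integral_undef h] at hK1; norm_num at hK1
  obtain ⟨M0, hM0sub⟩ := (Metric.isBounded_iff_subset_closedBall 0).mp hKsupp.isBounded
  set M : ℝ := max M0 0 with hMdef
  have hM : ∀ y ∈ tsupport K, ‖y‖ ≤ M := by
    intro y hy
    have := hM0sub hy
    rw [Metric.mem_closedBall, dist_zero_right] at this
    exact this.trans (le_max_left _ _)
  have hMnn : (0:ℝ) ≤ M := le_max_right _ _
  set η : ℝ := min (f t / 2) (ε * f t / (2 * (M + 1))) with hηdef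
  have hη : 0 < η := lt_min (by positivity) (by positivity)
  have hη1 : η ≤ f t / 2 := min_le_left _ _
  have hη2 : η ≤ ε * f t / (2 * (M + 1)) := min_le_right _ _
  obtain ⟨δ, hδpos, hδc⟩ := Metric.continuousAt_iff.mp hfc.continuousAt η hη
  have hKy_int : Integrable (fun y => K y • y) := by
    refine (hKint.const_mul M).mono'
      (hKm.aestronglyMeasurable.smul aestronglyMeasurable_id) ?_
    filter_upwards with y
    rcases eq_or_ne (K y) 0 with h0 | h0
    · simp [h0]
    · have hyS : y ∈ tsupport K := subset_tsupport K h0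
      rw [norm_smul, Real.norm_eq_abs, abs_of_nonneg (hK0 y)]
      nlinarith [hM y hyS, hK0 y, norm_nonneg y]
  have h2M : (0:ℝ) < 2 * M + 1 := by linarith
  have hstep : (0:ℝ) < δ / (2 * M + 1) := by positivity
  filter_upwards [Ioo_mem_nhdsGT_of_mem (Set.left_mem_Ico.mpr hstep)] with hh hhmem x hx
  obtain ⟨hh0, hhlt⟩ := hhmem
  set c : (Fin d → ℝ) → ℝ := fun y => f ((t + hh • x) + hh • y) with hcdef
  have hclose : ∀ y ∈ tsupport K, |c y - f t| ≤ η := by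
    intro y hy
    have hd : dist ((t + hh • x) + hh • y) t < δ := by
      rw [dist_eq_norm]
      have he : (t + hh • x) + hh • y - t = hh • x + hh • y := by abel
      rw [he]
      have hb : hh * (2 * M + 1) < δ := (lt_div_iff₀ h2M).mp hhlt
      calc ‖hh • x + hh • y‖ ≤ ‖hh • x‖ + ‖hh • y‖ := norm_add_le _ _
        _ = hh * ‖x‖ + hh * ‖y‖ := by
            rw [norm_smul, norm_smul, Real.norm_eq_abs, abs_of_pos hh0]
        _ ≤ hh * (2 * M + 1) := by nlinarith [hM x hx, hM y hy]
        _ < δ := hb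
    have := hδc hd
    rw [Real.dist_eq] at this
    exact this.le
  have hcnn : ∀ y, 0 ≤ c y := fun y => hf0 _
  have hcont : Continuous c := hfc.comp (continuous_const.add (continuous_id.const_smul hh))
  have hI1int : Integrable (fun y => c y * K y) := by
    refine (hKint.const_mul (f t + η)).mono'
      (hcont.aestronglyMeasurable.mul hKm.aestronglyMeasurable) ?_
    filter_upwards with y
    rcases eq_or_ne (K y) 0 with h0 | h0
    · simp [h0]
    · have hyS := subset_tsupport K h0
      have h1 := abs_le.mp (hclose y hyS)
      rw [Real.norm_eq_abs, abs_mul, abs_of_nonneg (hK0 y), abs_of_nonneg (hcnn y)]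
      nlinarith [hK0 y]
  have hI2int : Integrable (fun y => (c y * K y) • y) := by
    refine (hKint.const_mul ((f t + η) * M)).mono'
      ((hcont.aestronglyMeasurable.mul hKm.aestronglyMeasurable).smul
        aestronglyMeasurable_id) ?_
    filter_upwards with y
    rcases eq_or_ne (K y) 0 with h0 | h0
    · simp [h0]
    · have hyS := subset_tsupport K h0
      have h1 := abs_le.mp (hclose y hyS)
      rw [norm_smul, Real.norm_eq_abs, abs_mul, abs_of_nonneg (hK0 y),
        abs_of_nonneg (hcnn y)]
      have hp : c y * ‖y‖ ≤ (f t + η) * M :=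
        mul_le_mul (by linarith [h1.2]) (hM y hyS) (norm_nonneg y)
          (by linarith [hη.le, hft.le])
      nlinarith [mul_le_mul_of_nonneg_right hp (hK0 y)]
  have hI1lb : f t - η ≤ ∫ y, c y * K y := by
    have hmono : ∫ y, (f t - η) * K y ≤ ∫ y, c y * K y := by
      refine integral_mono (hKint.const_mul _) hI1int ?_
      intro y
      rcases eq_or_ne (K y) 0 with h0 | h0
      · simp [h0]
      · have hyS := subset_tsupport K h0
        have h1 := (abs_le.mp (hclose y hyS)).1
        show (f t - η) * K y ≤ c y * K y
        nlinarith [mul_le_mul_of_nonneg_right (show f t - η ≤ c y by linarith) (hK0 y)]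
    rwa [integral_const_mul, hK1, mul_one] at hmono
  have hftη : (0:ℝ) < f t - η := by linarith
  have hI1pos : 0 < ∫ y, c y * K y := lt_of_lt_of_le hftη hI1lb
  have hftKint : Integrable (fun y => (f t * K y) • y) := by
    have h := hKy_int.smul (f t)
    have heq : (fun y => (f t * K y) • y) = (f t • fun y => K y • y) := by
      funext y; simp [smul_smul]
    rw [heq]; exact h
  have hI2eq : ∫ y, (c y * K y) • y = ∫ y, ((c y - f t) * K y) • y := by
    have hsub : ∫ y, ((c y - f t) * K y) • y
        = (∫ y, (c y * K y) • y) - ∫ y, (f t * K y) • y := by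
      rw [← integral_sub hI2int hftKint]
      congr 1; funext y
      rw [← sub_smul]; ring_nf
    have hz : ∫ y, (f t * K y) • y = 0 := by
      have : ∫ y, (f t * K y) • y = f t • ∫ y, K y • y := by
        rw [← integral_smul]
        congr 1; funext y; rw [smul_smul]
      rw [this, hKmean, smul_zero]
    rw [hsub, hz, sub_zero]
  have hI2bd : ‖∫ y, (c y * K y) • y‖ ≤ η * M := by
    rw [hI2eq]
    have hb : ‖∫ y, ((c y - f t) * K y) • y‖ ≤ ∫ y, (η * M) * K y := by
      refine norm_integral_le_of_norm_le (hKint.const_mul _) ?_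
      filter_upwards with y
      rcases eq_or_ne (K y) 0 with h0 | h0
      · simp [h0]
      · have hyS := subset_tsupport K h0
        have h1 := hclose y hyS
        rw [norm_smul, Real.norm_eq_abs, abs_mul, abs_of_nonneg (hK0 y)]
        have hp : |c y - f t| * ‖y‖ ≤ η * M :=
          mul_le_mul h1 (hM y hyS) (norm_nonneg y) hη.le
        nlinarith [mul_le_mul_of_nonneg_right hp (hK0 y)]
    rw [integral_const_mul, hK1, mul_one] at hb
    exact hb
  have key : (∫ y, c y * K y)⁻¹ * ‖∫ y, (c y * K y) • y‖ ≤ ε := by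
    have h1 : (∫ y, c y * K y)⁻¹ ≤ (f t - η)⁻¹ :=
      inv_anti₀ hftη hI1lb
    have h2 : η * (2 * (M + 1)) ≤ ε * f t := (le_div_iff₀ (by positivity)).mp hη2
    calc (∫ y, c y * K y)⁻¹ * ‖∫ y, (c y * K y) • y‖
        ≤ (f t - η)⁻¹ * (η * M) :=
          mul_le_mul h1 hI2bd (norm_nonneg _) (by positivity)
      _ ≤ ε := by
          rw [inv_mul_le_iff₀ hftη]
          nlinarith [mul_le_mul_of_nonneg_left (show f t / 2 ≤ f t - η by linarith) hε.le]
  show ‖hh • ((∫ y, c y * K y)⁻¹ • ∫ y, (c y * K y) • y)‖ ≤ ε * hh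
  rw [norm_smul, norm_smul, Real.norm_eq_abs, abs_of_pos hh0, Real.norm_eq_abs,
    abs_of_pos (inv_pos.mpr hI1pos)]
  calc hh * ((∫ y, c y * K y)⁻¹ * ‖∫ y, (c y * K y) • y‖)
      ≤ hh * ε := by
        exact mul_le_mul_of_nonneg_left key hh0.le
    _ = ε * hh := mul_comm _ _
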